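/- The third element of the Böhm sequence differs from the third element of the Scott sequence: Y0 δ δ and B Y0 S S I are not β-convertible, where Y0 is Curry's fixed point combinator and δ = λab.b(ab). -/

import Mathlib

/-- Untyped λ-terms in de Bruijn notation. -/
inductive Lam : Type
  | var : Nat → Lam
  | app : Lam → Lam → Lam
  | lam : Lam → Lam
  deriving DecidableEq

namespace Lam

/-- Lift (shift) free variables ≥ `d` by one. -/
def lift (d : Nat) : Lam → Lam
  | var n => if n < d then var n else var (n + 1)
  | app s t => app (lift d s) (lift d t)
  | lam t => lam (lift (d + 1) t)

/-- Capture-avoiding substitution of `u` for the variable with index `k`. -/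
def subst (k : Nat) (u : Lam) : Lam → Lam
  | var n => if n = k then u else if k < n then var (n - 1) else var n
  | app s t => app (subst k u s) (subst k u t)
  | lam t => lam (subst (k + 1) (lift 0 u) t)

/-- One-step β-reduction `→β` (compatible closure of the β-rule). -/
inductive Step : Lam → Lam → Prop
  | beta (t u : Lam) : Step (app (lam t) u) (subst 0 u t)
  | appL {s s' : Lam} (t : Lam) : Step s s' → Step (app s t) (app s' t)
  | appR (s : Lam) {t t' : Lam} : Step t t' → Step (app s t) (app s t')
  | lam {t t' : Lam} : Step t t' → Step (lam t) (lam t')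

/-- Many-step β-reduction `↠β`. -/
def Red : Lam → Lam → Prop := Relation.ReflTransGen Step

/-- β-convertibility `=β`. -/
def Conv : Lam → Lam → Prop := Relation.EqvGen Step

/-- `Y` is a fixed point combinator: `Y x =β x (Y x)` for a fresh variable `x`. -/
def isFPC (Y : Lam) : Prop :=
  Conv (app (lift 0 Y) (var 0)) (app (var 0) (app (lift 0 Y) (var 0)))

/-- `M P^n`: `M` applied to `n` copies of `P`. -/
def appIter (M P : Lam) : Nat → Lam
  | 0 => M
  | n + 1 => appIter (app M P) P n

/-- `I = λx.x` -/
def K_I : Lam := lam (var 0)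

/-- `S = λxyz.xz(yz)` -/
def K_S : Lam := lam (lam (lam (app (app (var 2) (var 0)) (app (var 1) (var 0)))))

/-- `B = λxyz.x(yz)` -/
def K_B : Lam := lam (lam (lam (app (var 2) (app (var 1) (var 0)))))

/-- `δ = λab.b(ab)` -/
def K_delta : Lam := lam (lam (app (var 0) (app (var 1) (var 0))))

/-- `ω_f = λx.f(xx)` (with `f` the variable bound just outside). -/
def K_omega : Lam := lam (app (var 1) (app (var 0) (var 0)))

/-- Curry's fpc `Y0 = λf.ω_f ω_f`. -/
def Y0 : Lam := lam (app K_omega K_omega)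

/-- `η = λxf.f(xxf)` -/
def K_eta : Lam := lam (lam (app (var 0) (app (app (var 1) (var 1)) (var 0))))

/-- Turing's fpc `Y1 = ηη`. -/
def Y1 : Lam := app K_eta K_eta

/-- One head reduction step: contraction of the head redex. -/
inductive Head : Lam → Lam → Prop
  | beta (t u : Lam) : Head (app (lam t) u) (subst 0 u t)
  | app {s s' : Lam} (t : Lam) : (∀ u, s ≠ lam u) → Head s s' → Head (app s t) (app s' t)
  | lam {t t' : Lam} : Head t t' → Head (lam t) (lam t')

/-- Exactly `k` head reduction steps. -/
def HeadN : Nat → Lam → Lam → Prop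
  | 0, s, t => s = t
  | k + 1, s, t => ∃ u, Head s u ∧ HeadN k u t

/-- Exactly `k` β-reduction steps. -/
def StepN : Nat → Lam → Lam → Prop
  | 0, s, t => s = t
  | k + 1, s, t => ∃ u, Step s u ∧ StepN k u t


/-! ### de Bruijn lemmas -/

theorem lift_lift : ∀ (t : Lam) {d e : Nat}, d ≤ e →
    lift d (lift e t) = lift (e+1) (lift d t)
  | var n, d, e, h => by
      simp only [lift]; split_ifs <;> simp only [lift] <;> split_ifs <;>
        first | rfl | (congr 1; omega) | (exfalso; omega)
  | app s t, d, e, h => by simp only [lift, lift_lift s h, lift_lift t h]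
  | lam t, d, e, h => by simp only [lift, lift_lift t (Nat.succ_le_succ h)]

theorem subst_lift : ∀ (t : Lam) {k : Nat} {u : Lam}, subst k u (lift k t) = t
  | var n, k, u => by
      simp only [lift]; split_ifs <;> simp only [subst] <;> split_ifs <;>
        first | rfl | (congr 1; omega) | (exfalso; omega)
  | app s t, k, u => by simp only [lift, subst, subst_lift s, subst_lift t]
  | lam t, k, u => by simp only [lift, subst, subst_lift t]

theorem lift_subst_le : ∀ (t : Lam) {d k : Nat} {u : Lam}, d ≤ k →
    lift d (subst k u t) = subst (k+1) (lift d u) (lift d t)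
  | var n, d, k, u, h => by
      simp only [subst, lift]
      split_ifs <;> simp only [lift, subst] <;> split_ifs <;>
        first | rfl | (congr 1; omega) | (exfalso; omega)
  | app s t, d, k, u, h => by
      simp only [lift, subst, lift_subst_le s h, lift_subst_le t h]
  | lam t, d, k, u, h => by
      simp only [lift, subst, lift_subst_le t (Nat.succ_le_succ h), lift_lift u (Nat.zero_le d)]

theorem lift_subst_ge : ∀ (t : Lam) {d k : Nat} {u : Lam}, k ≤ d →
    lift d (subst k u t) = subst k (lift d u) (lift (d+1) t)
  | var n, d, k, u, h => by
      simp only [subst, lift]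
      split_ifs <;> simp only [lift, subst] <;> split_ifs <;>
        first | rfl | (congr 1; omega) | (exfalso; omega)
  | app s t, d, k, u, h => by
      simp only [lift, subst, lift_subst_ge s h, lift_subst_ge t h]
  | lam t, d, k, u, h => by
      simp only [lift, subst, lift_subst_ge t (Nat.succ_le_succ h), lift_lift u (Nat.zero_le d)]

theorem subst_subst : ∀ (t : Lam) {j k : Nat} {u v : Lam}, j ≤ k →
    subst k v (subst j u t) = subst j (subst k v u) (subst (k+1) (lift j v) t)
  | var n, j, k, u, v, h => by
      simp only [subst]
      split_ifs <;>
        (try simp only [subst, subst_lift]) <;> (try split_ifs) <;>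
        (try simp only [subst, subst_lift]) <;> (try split_ifs) <;>
        first | rfl | (congr 1; omega) | (exfalso; omega)
  | app s t, j, k, u, v, h => by
      simp only [subst, subst_subst s h, subst_subst t h]
  | lam t, j, k, u, v, h => by
      simp only [subst, subst_subst t (Nat.succ_le_succ h),
        lift_subst_le u (Nat.zero_le k), lift_lift v (Nat.zero_le j)]

/-! ### Parallel reduction -/

inductive Par : Lam → Lam → Prop
  | var (n : Nat) : Par (var n) (var n)
  | app {s s' t t' : Lam} : Par s s' → Par t t' → Par (app s t) (app s' t')
  | lam {t t' : Lam} : Par t t' → Par (lam t) (lam t')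
  | beta {b b' u u' : Lam} : Par b b' → Par u u' → Par (app (lam b) u) (subst 0 u' b')

theorem Par.refl (t : Lam) : Par t t := by
  induction t with
  | var n => exact Par.var n
  | app s t ih1 ih2 => exact Par.app ih1 ih2
  | lam t ih => exact Par.lam ih

theorem Step.toPar {t u : Lam} (h : Step t u) : Par t u := by
  induction h with
  | beta t u => exact Par.beta (Par.refl t) (Par.refl u)
  | appL t _ ih => exact Par.app ih (Par.refl t)
  | appR s _ ih => exact Par.app (Par.refl s) ih
  | lam _ ih => exact Par.lam ih

theorem Red.appL {s s' : Lam} (t : Lam) (h : Red s s') : Red (app s t) (app s' t) :=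
  Relation.ReflTransGen.lift (fun x => app x t) (fun _ _ h => Step.appL t h) _ _ h

theorem Red.appR (s : Lam) {t t' : Lam} (h : Red t t') : Red (app s t) (app s t') :=
  Relation.ReflTransGen.lift (fun x => app s x) (fun _ _ h => Step.appR s h) _ _ h

theorem Red.lam_ {t t' : Lam} (h : Red t t') : Red (lam t) (lam t') :=
  Relation.ReflTransGen.lift (fun x => lam x) (fun _ _ h => Step.lam h) _ _ h

theorem Par.toRed {t u : Lam} (h : Par t u) : Red t u := by
  induction h with
  | var n => exact Relation.ReflTransGen.refl
  | app _ _ ih1 ih2 => exact Relation.ReflTransGen.trans (Red.appL _ ih1) (Red.appR _ ih2)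
  | lam _ ih => exact Red.lam_ ih
  | @beta b b' u u' _ _ ih1 ih2 =>
      exact Relation.ReflTransGen.tail
        (Relation.ReflTransGen.trans (Red.appL _ (Red.lam_ ih1)) (Red.appR _ ih2))
        (Step.beta b' u')

theorem Par.lift {t u : Lam} (h : Par t u) : ∀ (d : Nat), Par (lift d t) (lift d u) := by
  induction h with
  | var n => intro d; simp only [Lam.lift]; split <;> exact Par.refl _
  | app _ _ ih1 ih2 => intro d; exact Par.app (ih1 d) (ih2 d)
  | lam _ ih => intro d; exact Par.lam (ih (d+1))
  | @beta b b' u u' _ _ ih1 ih2 =>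
      intro d
      have := Par.beta (ih1 (d+1)) (ih2 d)
      rwa [← lift_subst_ge b' (Nat.zero_le d)] at this

theorem Par.subst {t t' : Lam} (ht : Par t t') : ∀ {k : Nat} {u u' : Lam}, Par u u' →
    Par (subst k u t) (subst k u' t') := by
  induction ht with
  | var n =>
      intro k u u' hu; simp only [Lam.subst]
      split
      · exact hu
      · split <;> exact Par.refl _
  | app _ _ ih1 ih2 => intro k u u' hu; exact Par.app (ih1 hu) (ih2 hu)
  | lam _ ih => intro k u u' hu; exact Par.lam (ih (hu.lift 0))
  | @beta b b' c c' _ _ ih1 ih2 =>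
      intro k u u' hu
      have := Par.beta (ih1 (k := k+1) (hu.lift 0)) (ih2 (k := k) hu)
      rwa [← subst_subst b' (Nat.zero_le k)] at this

/-! ### Complete development and confluence -/

def dev : Lam → Lam
  | var n => var n
  | lam t => lam (dev t)
  | app (lam b) u => subst 0 (dev u) (dev b)
  | app (var n) u => app (var n) (dev u)
  | app (app s t) u => app (dev (app s t)) (dev u)

theorem Par.dev {t u : Lam} (h : Par t u) : Par u (dev t) := by
  induction h with
  | var n => exact Par.var n
  | @app s s' t t' hs ht ih1 ih2 =>
      cases s with
      | var n => cases hs; exact Par.app ih1 ih2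
      | app a b => exact Par.app ih1 ih2
      | lam b =>
          cases hs with
          | lam hb =>
              cases ih1 with
              | lam hb' => exact Par.beta hb' ih2
  | lam _ ih => exact Par.lam ih
  | @beta b b' u u' _ _ ih1 ih2 => exact Par.subst ih1 ih2

theorem par_diamond {t u v : Lam} (h1 : Par t u) (h2 : Par t v) :
    ∃ w, Par u w ∧ Par v w := ⟨dev t, h1.dev, h2.dev⟩

theorem conv_join {a b : Lam} (h : Conv a b) :
    ∃ c, Red a c ∧ Red b c := by
  have hdia : ∀ a b c, Par a b → Par a c →
      ∃ d, Relation.ReflGen Par b d ∧ Relation.ReflTransGen Par c d := by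
    intro a b c h1 h2
    rcases par_diamond h1 h2 with ⟨d, hb, hc⟩
    exact ⟨d, Relation.ReflGen.single hb, Relation.ReflTransGen.single hc⟩
  have hequiv := Relation.equivalence_join_reflTransGen hdia
  have hj : Relation.Join (Relation.ReflTransGen Par) a b := by
    induction h with
    | rel x y hxy => exact ⟨y, Relation.ReflTransGen.single hxy.toPar, Relation.ReflTransGen.refl⟩
    | refl x => exact hequiv.refl x
    | symm x y _ ih => exact hequiv.symm ih
    | trans x y z _ _ ih1 ih2 => exact hequiv.trans ih1 ih2
  rcases hj with ⟨c, hac, hbc⟩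
  have par_red : ∀ {x y : Lam}, Relation.ReflTransGen Par x y → Red x y := by
    intro x y hxy
    induction hxy with
    | refl => exact Relation.ReflTransGen.refl
    | tail _ h ih => exact Relation.ReflTransGen.trans ih h.toRed
  exact ⟨c, par_red hac, par_red hbc⟩



/-! ### Bound-variable bookkeeping -/

def bv (m : Nat) : Lam → Bool
  | var n => n < m
  | app s t => bv m s && bv m t
  | lam t => bv (m+1) t

theorem bv_lift : ∀ {t : Lam} {m d : Nat}, bv m t = true → m ≤ d → lift d t = t
  | var n, m, d, h, hmd => by
      simp only [bv, decide_eq_true_eq] at h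
      simp only [lift, if_pos (by omega : n < d)]
  | app s t, m, d, h, hmd => by
      simp only [bv, Bool.and_eq_true] at h
      simp only [lift, bv_lift h.1 hmd, bv_lift h.2 hmd]
  | lam t, m, d, h, hmd => by
      simp only [bv] at h
      simp only [lift, bv_lift h (Nat.succ_le_succ hmd)]

theorem bv_subst : ∀ {t : Lam} {m k : Nat} {u : Lam}, bv m t = true → m ≤ k → subst k u t = t
  | var n, m, k, u, h, hmk => by
      simp only [bv, decide_eq_true_eq] at h
      simp only [subst, if_neg (by omega : ¬ n = k), if_neg (by omega : ¬ k < n)]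
  | app s t, m, k, u, h, hmk => by
      simp only [bv, Bool.and_eq_true] at h
      simp only [subst, bv_subst h.1 hmk, bv_subst h.2 hmk]
  | lam t, m, k, u, h, hmk => by
      simp only [bv] at h
      simp only [subst, bv_subst h (Nat.succ_le_succ hmk)]

/-! ### A redex detector: normal forms don't step -/

def hasRedex : Lam → Bool
  | var _ => false
  | lam t => hasRedex t
  | app (lam _) _ => true
  | app s t => hasRedex s || hasRedex t

theorem Step.hasRedex {t u : Lam} (h : Step t u) : hasRedex t = true := by
  induction h with
  | beta t u => rfl
  | appL t _ ih =>
      rename_i s s' _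
      cases s with
      | var n => simp [Lam.hasRedex] at ih
      | lam b => rfl
      | app a b => simp [Lam.hasRedex, ih]
  | appR s _ ih =>
      cases s with
      | var n => simpa [Lam.hasRedex] using ih
      | lam b => rfl
      | app a b => simp [Lam.hasRedex, ih]
  | lam _ ih => exact ih

/-! ### Occurrence of `I` -/

def occI : Lam → Bool
  | var _ => false
  | app s t => occI s || occI t
  | lam t => (t == var 0) || occI t


theorem lift_app {d : Nat} {s t : Lam} : lift d (app s t) = app (lift d s) (lift d t) := rfl
theorem lift_lam {d : Nat} {t : Lam} : lift d (lam t) = lam (lift (d+1) t) := rfl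
theorem subst_app {k : Nat} {u s t : Lam} :
    subst k u (app s t) = app (subst k u s) (subst k u t) := rfl
theorem subst_lam {k : Nat} {u t : Lam} :
    subst k u (lam t) = lam (subst (k+1) (lift 0 u) t) := rfl

/-! ### The grammar of reducts of `(ω ω) δ` (A-side) -/

def omA : Lam := lam (app K_delta (app (var 0) (var 0)))
def omA' : Lam := lam (lam (app (var 0) (app (app (var 1) (var 1)) (var 0))))

inductive OA : Lam → Prop
  | om : OA omA
  | omp : OA omA'

theorem OA.bv {t : Lam} (h : OA t) : bv 0 t = true := by
  cases h <;> decide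

theorem OA.step {t u : Lam} (h : OA t) (hs : Step t u) : OA u := by
  cases h with
  | om =>
      cases hs with
      | lam h' =>
          cases h' with
          | beta b c =>
              rw [show subst 0 (app (var 0) (var 0))
                    (lam (app (var 0) (app (var 1) (var 0)))) =
                  lam (app (var 0) (app (app (var 1) (var 1)) (var 0))) from by decide]
              exact OA.omp
          | appL _ h'' => exact absurd h''.hasRedex (by decide)
          | appR _ h'' => exact absurd h''.hasRedex (by decide)
  | omp =>
      exact absurd hs.hasRedex (by decide)

inductive GA : Nat → Lam → Prop
  | ww {s t} : OA s → OA t → GA 0 (app s t)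
  | chain {t} : GA 0 t → GA 0 (app K_delta t)
  | apd {s} : GA 0 s → GA 0 (app s K_delta)
  | hd {t} : GA 1 t → GA 0 (lam (app (var 0) t))
  | pv {s} : GA 0 s → GA 1 (app s (var 0))
  | vs {t} : GA 1 t → GA 1 (app (var 0) t)

theorem GA.lift_eq {m : Nat} {t : Lam} (h : GA m t) : ∀ d, m ≤ d → lift d t = t := by
  induction h with
  | ww h1 h2 => intro d _; simp only [lift_app, bv_lift h1.bv (Nat.zero_le d),
      bv_lift h2.bv (Nat.zero_le d)]
  | chain _ ih => intro d hd; simp only [lift_app, ih d hd,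
      bv_lift (t := K_delta) (by decide) (Nat.zero_le d)]
  | apd _ ih => intro d hd; simp only [lift_app, ih d hd,
      bv_lift (t := K_delta) (by decide) (Nat.zero_le d)]
  | hd _ ih => intro d _; simp only [lift, ih (d+1) (by omega),
      if_pos (by omega : 0 < d + 1)]
  | pv _ ih => intro d hd; simp only [lift, ih d (by omega),
      if_pos (by omega : 0 < d)]
  | vs _ ih => intro d hd; simp only [lift, ih d hd, if_pos (by omega : 0 < d)]

theorem GA.subst_eq {m : Nat} {t : Lam} (h : GA m t) : ∀ k u, m ≤ k → subst k u t = t := by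
  induction h with
  | ww h1 h2 => intro k u _; simp only [subst_app, bv_subst h1.bv (Nat.zero_le k),
      bv_subst h2.bv (Nat.zero_le k)]
  | chain _ ih => intro k u hk; simp only [subst_app, ih k u hk,
      bv_subst (t := K_delta) (by decide) (Nat.zero_le k)]
  | apd _ ih => intro k u hk; simp only [subst_app, ih k u hk,
      bv_subst (t := K_delta) (by decide) (Nat.zero_le k)]
  | hd _ ih => intro k u _; simp only [subst, ih (k+1) (lift 0 u) (by omega),
      if_neg (by omega : ¬ (0 = k + 1)), if_neg (by omega : ¬ k + 1 < 0)]
  | pv _ ih => intro k u hk; simp only [subst, ih k u (by omega),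
      if_neg (by omega : ¬ (0 = k)), if_neg (by omega : ¬ k < 0)]
  | vs _ ih => intro k u hk; simp only [subst, ih k u hk,
      if_neg (by omega : ¬ (0 = k)), if_neg (by omega : ¬ k < 0)]

theorem GA.subst_zero {m : Nat} {t : Lam} (h : GA m t) (hm : m = 1) :
    GA 0 (subst 0 K_delta t) ∧ GA 1 (subst 0 (var 0) t) := by
  induction h with
  | ww h1 h2 => exact absurd hm (by omega)
  | chain _ _ => exact absurd hm (by omega)
  | apd _ _ => exact absurd hm (by omega)
  | hd _ _ => exact absurd hm (by omega)
  | pv hs _ =>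
      constructor
      · rw [show subst 0 K_delta (app _ (var 0)) =
          app (subst 0 K_delta _) (subst 0 K_delta (var 0)) from rfl]
        rw [hs.subst_eq 0 K_delta (by omega)]
        rw [show subst 0 K_delta (var 0) = K_delta from rfl]
        exact GA.apd hs
      · rw [show subst 0 (var 0) (app _ (var 0)) =
          app (subst 0 (var 0) _) (subst 0 (var 0) (var 0)) from rfl]
        rw [hs.subst_eq 0 (var 0) (by omega)]
        rw [show subst 0 (var 0) (var 0) = var 0 from rfl]
        exact GA.pv hs
  | vs _ ih =>
      rcases ih rfl with ⟨ih1, ih2⟩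
      constructor
      · rw [show subst 0 K_delta (app (var 0) _) =
          app K_delta (subst 0 K_delta _) from rfl]
        exact GA.chain ih1
      · rw [show subst 0 (var 0) (app (var 0) _) =
          app (var 0) (subst 0 (var 0) _) from rfl]
        exact GA.vs ih2

theorem GA.step {m : Nat} {t : Lam} (h : GA m t) : ∀ u, Step t u → GA m u := by
  induction h with
  | @ww s t h1 h2 =>
      intro u hs
      cases hs with
      | beta b c =>
          cases h1 with
          | om =>
              rw [show subst 0 t (app K_delta (app (var 0) (var 0))) =
                  app K_delta (app t t) from by
                simp only [subst, bv_subst (t := K_delta) (by decide) (Nat.zero_le 0)]; rfl]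
              exact GA.chain (GA.ww h2 h2)
          | omp =>
              rw [show subst 0 t (lam (app (var 0) (app (app (var 1) (var 1)) (var 0)))) =
                  lam (app (var 0) (app (app (lift 0 t) (lift 0 t)) (var 0))) from by
                simp only [subst, lift]; rfl]
              rw [bv_lift h2.bv (Nat.zero_le 0)]
              exact GA.hd (GA.pv (GA.ww h2 h2))
      | appL _ h' => exact GA.ww (h1.step h') h2
      | appR _ h' => exact GA.ww h1 (h2.step h')
  | @chain t ht ih =>
      intro u hs
      cases hs with
      | beta b c =>
          rw [show subst 0 t (lam (app (var 0) (app (var 1) (var 0)))) =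
              lam (app (var 0) (app (lift 0 t) (var 0))) from by
            simp only [subst, lift]; rfl]
          rw [ht.lift_eq 0 (Nat.zero_le 0)]
          exact GA.hd (GA.pv ht)
      | appL _ h' => exact absurd h'.hasRedex (by decide)
      | appR _ h' => exact GA.chain (ih _ h')
  | @apd s hsP ih =>
      intro u hs
      cases hs with
      | beta b c =>
          cases hsP with
          | hd hX => exact GA.chain (hX.subst_zero rfl).1
      | appL _ h' => exact GA.apd (ih _ h')
      | appR _ h' => exact absurd h'.hasRedex (by decide)
  | @hd X hX ih =>
      intro u hs
      cases hs with
      | lam h' =>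
          cases h' with
          | appL _ h'' => exact absurd h''.hasRedex (by decide)
          | appR _ h'' => exact GA.hd (ih _ h'')
  | @pv s hsP ih =>
      intro u hs
      cases hs with
      | beta b c =>
          cases hsP with
          | hd hX => exact GA.vs (hX.subst_zero rfl).2
      | appL _ h' => exact GA.pv (ih _ h')
      | appR _ h' => exact absurd h'.hasRedex (by decide)
  | @vs X hX ih =>
      intro u hs
      cases hs with
      | appL _ h' => exact absurd h'.hasRedex (by decide)
      | appR _ h' => exact GA.vs (ih _ h')

theorem GA.occI {m : Nat} {t : Lam} (h : GA m t) : occI t = false := by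
  induction h with
  | ww h1 h2 =>
      cases h1 <;> cases h2 <;> decide
  | chain _ ih => simp [Lam.occI, ih]; decide
  | apd _ ih => simp [Lam.occI, ih]; decide
  | hd _ ih => simp [Lam.occI, ih]
  | pv _ ih => simp [Lam.occI, ih]
  | vs _ ih => simp [Lam.occI, ih]



/-! ### B-side combinators -/

def SbB (a : Lam) : Lam :=
  lam (lam (app (app (lift 0 (lift 0 a)) (var 0)) (app (var 1) (var 0))))
def S1B : Lam := lam (lam (app (app K_S (var 0)) (app (var 1) (var 0))))
def S2B : Lam := lam (lam (app (SbB (var 0)) (app (var 1) (var 0))))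
def S3B : Lam :=
  lam (lam (lam (app (app (var 1) (var 0)) (app (app (var 2) (var 1)) (var 0)))))
def om2d : Lam :=
  lam (lam (lam (app (app (var 1) (var 0)) (app (app (app (var 2) (var 2)) (var 1)) (var 0)))))

theorem bv_mono : ∀ {t : Lam} {m m' : Nat}, bv m t = true → m ≤ m' → bv m' t = true
  | var n, m, m', h, hm => by
      simp only [bv, decide_eq_true_eq] at *; omega
  | app s t, m, m', h, hm => by
      simp only [bv, Bool.and_eq_true] at *
      exact ⟨bv_mono h.1 hm, bv_mono h.2 hm⟩
  | lam t, m, m', h, hm => by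
      simp only [bv] at *
      exact bv_mono h (by omega)

theorem Sb_lift {a : Lam} {d : Nat} : lift d (SbB a) = SbB (lift d a) := by
  have h0 : lift (d+1+1) (var 0) = var 0 := bv_lift (m := 1) (by decide) (by omega)
  have h1 : lift (d+1+1) (var 1) = var 1 := bv_lift (m := 2) (by decide) (by omega)
  simp only [SbB, lift_lam, lift_app, h0, h1]
  rw [← lift_lift (lift 0 a) (Nat.zero_le (d+1)), ← lift_lift a (Nat.zero_le d)]

theorem Sb_subst {a u : Lam} {k : Nat} : subst k u (SbB a) = SbB (subst k u a) := by
  have h0 : subst (k+1+1) (lift 0 (lift 0 u)) (var 0) = var 0 :=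
    bv_subst (m := 1) (by decide) (by omega)
  have h1 : subst (k+1+1) (lift 0 (lift 0 u)) (var 1) = var 1 :=
    bv_subst (m := 2) (by decide) (by omega)
  simp only [SbB, subst_lam, subst_app, h0, h1]
  rw [lift_subst_le a (Nat.zero_le k), lift_subst_le (lift 0 a) (Nat.zero_le (k+1))]

theorem Sb_beta {a s : Lam} :
    subst 0 s (lam (app (app (lift 0 (lift 0 a)) (var 0)) (app (var 1) (var 0)))) =
    lam (app (app (lift 0 a) (var 0)) (app (lift 0 s) (var 0))) := by
  simp only [subst_lam, subst_app]
  rw [lift_lift a (Nat.le_refl 0), subst_lift]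
  rfl

/-! ### Engine combinators `G` (reducts of `S S`) -/

inductive GG : Lam → Prop
  | ss : GG (app K_S K_S)
  | s1 : GG S1B
  | s2 : GG S2B
  | s3 : GG S3B

theorem GG.bv {g : Lam} (h : GG g) : bv 0 g = true := by
  cases h <;> decide

theorem GG.step {g u : Lam} (h : GG g) (hs : Step g u) : GG u := by
  cases h with
  | ss =>
      cases hs with
      | beta b c =>
          rw [show subst 0 K_S (lam (lam (app (app (var 2) (var 0)) (app (var 1) (var 0))))) =
              S1B from by decide]
          exact GG.s1
      | appL _ h' => exact absurd h'.hasRedex (by decide)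
      | appR _ h' => exact absurd h'.hasRedex (by decide)
  | s1 =>
      cases hs with
      | lam h1 =>
        cases h1 with
        | lam h2 =>
          cases h2 with
          | appL _ h3 =>
              cases h3 with
              | beta b c =>
                  rw [show subst 0 (var 0)
                        (lam (lam (app (app (var 2) (var 0)) (app (var 1) (var 0))))) =
                      SbB (var 0) from by decide]
                  exact GG.s2
              | appL _ h4 => exact absurd h4.hasRedex (by decide)
              | appR _ h4 => cases h4
          | appR _ h3 => exact absurd h3.hasRedex (by decide)
  | s2 =>
      cases hs with
      | lam h1 =>
        cases h1 with
        | lam h2 =>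
          cases h2 with
          | beta b c =>
              rw [show subst 0 (app (var 1) (var 0))
                    (lam (app (app (lift 0 (lift 0 (var 0))) (var 0))
                      (app (var 1) (var 0)))) =
                  lam (app (app (var 1) (var 0)) (app (app (var 2) (var 1)) (var 0)))
                  from by decide]
              exact GG.s3
          | appL _ h3 => exact absurd h3.hasRedex (by decide)
          | appR _ h3 => exact absurd h3.hasRedex (by decide)
  | s3 => exact absurd hs.hasRedex (by decide)

/-! ### Atoms -/

def Atom (a : Lam) : Prop := a = K_I ∨ ∃ n, a = var n

theorem Atom.lift {a : Lam} (h : Atom a) (d : Nat) : Atom (lift d a) := by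
  rcases h with rfl | ⟨n, rfl⟩
  · left; exact bv_lift (by decide) (Nat.zero_le d)
  · right; simp only [Lam.lift]; split <;> exact ⟨_, rfl⟩

theorem Atom.subst {a b : Lam} (ha : Atom a) (hb : Atom b) (k : Nat) : Atom (subst k b a) := by
  rcases ha with rfl | ⟨n, rfl⟩
  · left; exact bv_subst (by decide) (Nat.zero_le k)
  · simp only [Lam.subst]; split
    · exact hb
    · split <;> exact Or.inr ⟨_, rfl⟩

theorem Atom.nostep {a u : Lam} (h : Atom a) (hs : Step a u) : False := by
  rcases h with rfl | ⟨n, rfl⟩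
  · exact absurd hs.hasRedex (by decide)
  · cases hs

/-! ### The `O2` layer (reducts of `ω_{SS}`) -/

inductive O2 : Lam → Prop
  | mk1 {g} : GG g → O2 (lam (app g (app (var 0) (var 0))))
  | mk2 : O2 (lam (lam (app (app K_S (var 0)) (app (app (var 1) (var 1)) (var 0)))))
  | mk3 : O2 (lam (lam (app (SbB (var 0)) (app (app (var 1) (var 1)) (var 0)))))
  | mk4 : O2 om2d

theorem O2.bv {o : Lam} (h : O2 o) : bv 0 o = true := by
  cases h with
  | mk1 hg =>
      simp only [Lam.bv, Bool.and_eq_true]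
      exact ⟨bv_mono hg.bv (Nat.zero_le 1), by decide⟩
  | mk2 => decide
  | mk3 => decide
  | mk4 => decide

theorem O2.step {o u : Lam} (h : O2 o) (hs : Step o u) : O2 u := by
  cases h with
  | @mk1 g hg =>
      cases hs with
      | lam h1 =>
        cases h1 with
        | beta b c =>
            cases hg with
            | s1 =>
                rw [show subst 0 (app (var 0) (var 0))
                      (lam (app (app K_S (var 0)) (app (var 1) (var 0)))) =
                    lam (app (app K_S (var 0)) (app (app (var 1) (var 1)) (var 0)))
                    from by decide]
                exact O2.mk2
            | s2 =>
                rw [show subst 0 (app (var 0) (var 0))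
                      (lam (app (SbB (var 0)) (app (var 1) (var 0)))) =
                    lam (app (SbB (var 0)) (app (app (var 1) (var 1)) (var 0)))
                    from by decide]
                exact O2.mk3
            | s3 =>
                rw [show subst 0 (app (var 0) (var 0))
                      (lam (lam (app (app (var 1) (var 0))
                        (app (app (var 2) (var 1)) (var 0))))) =
                    lam (lam (app (app (var 1) (var 0))
                      (app (app (app (var 2) (var 2)) (var 1)) (var 0))))
                    from by decide]
                exact O2.mk4
        | appL _ h2 => exact O2.mk1 (hg.step h2)
        | appR _ h2 => exact absurd h2.hasRedex (by decide)
  | mk2 =>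
      cases hs with
      | lam h1 =>
        cases h1 with
        | lam h2 =>
          cases h2 with
          | appL _ h3 =>
              cases h3 with
              | beta b c =>
                  rw [show subst 0 (var 0)
                        (lam (lam (app (app (var 2) (var 0)) (app (var 1) (var 0))))) =
                      SbB (var 0) from by decide]
                  exact O2.mk3
              | appL _ h4 => exact absurd h4.hasRedex (by decide)
              | appR _ h4 => cases h4
          | appR _ h3 => exact absurd h3.hasRedex (by decide)
  | mk3 =>
      cases hs with
      | lam h1 =>
        cases h1 with
        | lam h2 =>
          cases h2 with
          | beta b c =>
              rw [show subst 0 (app (app (var 1) (var 1)) (var 0))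
                    (lam (app (app (lift 0 (lift 0 (var 0))) (var 0))
                      (app (var 1) (var 0)))) =
                  lam (app (app (var 1) (var 0))
                    (app (app (app (var 2) (var 2)) (var 1)) (var 0)))
                  from by decide]
              exact O2.mk4
          | appL _ h3 => exact absurd h3.hasRedex (by decide)
          | appR _ h3 => exact absurd h3.hasRedex (by decide)
  | mk4 => exact absurd hs.hasRedex (by decide)



inductive BC : Type
  | e : BC
  | st : Lam → BC
  | st2 : Lam → BC

inductive GB : BC → Lam → Prop
  | ee1 {o o'} : O2 o → O2 o' → GB .e (app o o')
  | ee2 {g X} : GG g → GB .e X → GB .e (app g X)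
  | ee3 {b} : GB (.st (var 0)) b → GB .e (lam b)
  | p1 {X a} : GB .e X → Atom a → GB (.st a) (app X a)
  | p2 {a s} : Atom a → GB (.st a) s → GB (.st a) (app (app K_S a) s)
  | p3 {a s} : Atom a → GB (.st a) s → GB (.st a) (app (SbB a) s)
  | p3d {a s} : Atom a → GB (.st a) s → GB (.st a) (app K_delta s)
  | p4 {a s} : Atom a → GB (.st a) s → GB (.st a) (app a s)
  | p5 {a b} : Atom a → GB (.st2 (lift 0 a)) b → GB (.st a) (lam b)
  | q1 {a q} : Atom a → GB (.st a) q → GB (.st2 a) (app q (var 0))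
  | q2 {a s} : Atom a → GB (.st2 a) s → GB (.st2 a) (app (app a (var 0)) s)
  | q3 {a s} : Atom a → GB (.st2 a) s → GB (.st2 a) (app (var 0) s)

def BC.liftT (d : Nat) : BC → BC
  | .e => .e
  | .st a => .st (lift d a)
  | .st2 a => .st2 (lift d a)

def BC.substT (k : Nat) (b : Lam) : BC → BC
  | .e => .e
  | .st a => .st (subst k b a)
  | .st2 a => .st2 (subst k b a)

theorem subst_var0 {k : Nat} {b : Lam} (h : 1 ≤ k ∨ b = var 0) :
    subst k b (var 0) = var 0 := by
  rcases h with hk | rfl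
  · simp only [subst, if_neg (by omega : ¬ (0 = k)), if_neg (by omega : ¬ k < 0)]
  · simp only [subst]; split <;> [rfl; (split <;> [(exfalso; omega); rfl])]

theorem lift_var0 {d : Nat} (h : 1 ≤ d) : lift d (var 0) = var 0 := by
  simp only [lift, if_pos (by omega : 0 < d)]

theorem GB.liftc {c : BC} {t : Lam} (h : GB c t) :
    ∀ d, (∀ a, c = BC.st2 a → 1 ≤ d) → GB (c.liftT d) (lift d t) := by
  induction h with
  | ee1 h1 h2 =>
      intro d _
      rw [lift_app, bv_lift h1.bv (Nat.zero_le d), bv_lift h2.bv (Nat.zero_le d)]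
      exact GB.ee1 h1 h2
  | ee2 hg _ ih =>
      intro d _
      rw [lift_app, bv_lift hg.bv (Nat.zero_le d)]
      exact GB.ee2 hg (ih d (fun _ h => nomatch h))
  | ee3 _ ih =>
      intro d _
      rw [lift_lam]
      have hb := ih (d+1) (fun _ h => nomatch h)
      rw [show (BC.st (var 0)).liftT (d+1) = BC.st (var 0) from by
        simp [BC.liftT, lift_var0 (by omega : 1 ≤ d+1)]] at hb
      exact GB.ee3 hb
  | p1 _ ha ih =>
      intro d _
      rw [lift_app]
      exact GB.p1 (ih d (fun _ h => nomatch h)) (ha.lift d)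
  | p2 ha _ ih =>
      intro d hd
      rw [lift_app, lift_app, bv_lift (t := K_S) (by decide) (Nat.zero_le d)]
      exact GB.p2 (ha.lift d) (ih d (fun _ h => nomatch h))
  | p3 ha _ ih =>
      intro d hd
      rw [lift_app, Sb_lift]
      exact GB.p3 (ha.lift d) (ih d (fun _ h => nomatch h))
  | p3d ha _ ih =>
      intro d hd
      rw [lift_app, bv_lift (t := K_delta) (by decide) (Nat.zero_le d)]
      exact GB.p3d (ha.lift d) (ih d (fun _ h => nomatch h))
  | p4 ha _ ih =>
      intro d hd
      rw [lift_app]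
      exact GB.p4 (ha.lift d) (ih d (fun _ h => nomatch h))
  | @p5 a b ha _ ih =>
      intro d hd
      rw [lift_lam]
      refine GB.p5 (ha.lift d) ?_
      have hb := ih (d+1) (fun _ _ => by omega)
      rw [show (BC.st2 (lift 0 a)).liftT (d+1) = BC.st2 (lift 0 (lift d a)) from by
        simp only [BC.liftT]; rw [← lift_lift a (Nat.zero_le d)]] at hb
      exact hb
  | q1 ha _ ih =>
      intro d hd
      rw [lift_app, lift_var0 (hd _ rfl)]
      exact GB.q1 (ha.lift d) (ih d (fun _ h => nomatch h))
  | q2 ha _ ih =>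
      intro d hd
      rw [lift_app, lift_app, lift_var0 (hd _ rfl)]
      exact GB.q2 (ha.lift d) (ih d hd)
  | q3 ha _ ih =>
      intro d hd
      rw [lift_app, lift_var0 (hd _ rfl)]
      exact GB.q3 (ha.lift d) (ih d hd)

theorem GB.substc {c : BC} {t : Lam} (h : GB c t) :
    ∀ k b, Atom b → (∀ a, c = BC.st2 a → 1 ≤ k ∨ b = var 0) →
    GB (c.substT k b) (subst k b t) := by
  induction h with
  | ee1 h1 h2 =>
      intro k b _ _
      rw [subst_app, bv_subst h1.bv (Nat.zero_le k), bv_subst h2.bv (Nat.zero_le k)]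
      exact GB.ee1 h1 h2
  | ee2 hg _ ih =>
      intro k b hb _
      rw [subst_app, bv_subst hg.bv (Nat.zero_le k)]
      exact GB.ee2 hg (ih k b hb (fun _ h => nomatch h))
  | ee3 _ ih =>
      intro k b hb _
      rw [subst_lam]
      have h' := ih (k+1) (lift 0 b) (hb.lift 0) (fun _ h => nomatch h)
      rw [show (BC.st (var 0)).substT (k+1) (lift 0 b) = BC.st (var 0) from by
        simp only [BC.substT]
        rw [subst_var0 (Or.inl (by omega))]] at h'
      exact GB.ee3 h'
  | p1 _ ha ih =>
      intro k b hb _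
      rw [subst_app]
      exact GB.p1 (ih k b hb (fun _ h => nomatch h)) (ha.subst hb k)
  | p2 ha _ ih =>
      intro k b hb _
      rw [subst_app, subst_app, bv_subst (t := K_S) (by decide) (Nat.zero_le k)]
      exact GB.p2 (ha.subst hb k) (ih k b hb (fun _ h => nomatch h))
  | p3 ha _ ih =>
      intro k b hb _
      rw [subst_app, Sb_subst]
      exact GB.p3 (ha.subst hb k) (ih k b hb (fun _ h => nomatch h))
  | p3d ha _ ih =>
      intro k b hb _
      rw [subst_app, bv_subst (t := K_delta) (by decide) (Nat.zero_le k)]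
      exact GB.p3d (ha.subst hb k) (ih k b hb (fun _ h => nomatch h))
  | p4 ha _ ih =>
      intro k b hb _
      rw [subst_app]
      exact GB.p4 (ha.subst hb k) (ih k b hb (fun _ h => nomatch h))
  | @p5 a bd ha _ ih =>
      intro k b hb _
      rw [subst_lam]
      refine GB.p5 (ha.subst hb k) ?_
      have h' := ih (k+1) (lift 0 b) (hb.lift 0) (fun _ _ => Or.inl (by omega))
      rw [show (BC.st2 (lift 0 a)).substT (k+1) (lift 0 b) =
          BC.st2 (lift 0 (subst k b a)) from by
        simp only [BC.substT]
        rw [← lift_subst_le a (Nat.zero_le k)]] at h'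
      exact h'
  | q1 ha _ ih =>
      intro k b hb hc
      rw [subst_app, subst_var0 (hc _ rfl)]
      exact GB.q1 (ha.subst hb k) (ih k b hb (fun _ h => nomatch h))
  | q2 ha _ ih =>
      intro k b hb hc
      rw [subst_app, subst_app, subst_var0 (hc _ rfl)]
      exact GB.q2 (ha.subst hb k) (ih k b hb hc)
  | q3 ha _ ih =>
      intro k b hb hc
      rw [subst_app, subst_var0 (hc _ rfl)]
      exact GB.q3 (ha.subst hb k) (ih k b hb hc)



theorem atom0 : Atom (var 0) := Or.inr ⟨0, rfl⟩
theorem atom1 : Atom (var 1) := Or.inr ⟨1, rfl⟩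

/-- beta equations (generic in the closed parameters) -/
theorem hS1beta {X : Lam} :
    subst 0 X (lam (app (app K_S (var 0)) (app (var 1) (var 0)))) =
    lam (app (app K_S (var 0)) (app (lift 0 X) (var 0))) := rfl

theorem hS2beta {X : Lam} :
    subst 0 X (lam (app (SbB (var 0)) (app (var 1) (var 0)))) =
    lam (app (SbB (var 0)) (app (lift 0 X) (var 0))) := rfl

theorem hS3beta {X : Lam} :
    subst 0 X (lam (lam (app (app (var 1) (var 0)) (app (app (var 2) (var 1)) (var 0))))) =
    lam (lam (app (app (var 1) (var 0)) (app (app (lift 0 (lift 0 X)) (var 1)) (var 0)))) := rfl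

theorem hKSbeta {a : Lam} :
    subst 0 a (lam (lam (app (app (var 2) (var 0)) (app (var 1) (var 0))))) = SbB a := rfl

theorem hdeltabeta {s : Lam} :
    subst 0 s (lam (app (var 0) (app (var 1) (var 0)))) =
    lam (app (var 0) (app (lift 0 s) (var 0))) := rfl

theorem hmk1beta {g o' : Lam} (hg : bv 0 g = true) :
    subst 0 o' (app g (app (var 0) (var 0))) = app g (app o' o') := by
  rw [show subst 0 o' (app g (app (var 0) (var 0))) =
      app (subst 0 o' g) (app o' o') from rfl, bv_subst hg (Nat.zero_le 0)]

theorem hmk2beta {o' : Lam} (h : bv 0 o' = true) :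
    subst 0 o' (lam (app (app K_S (var 0)) (app (app (var 1) (var 1)) (var 0)))) =
    lam (app (app K_S (var 0)) (app (app o' o') (var 0))) := by
  rw [show subst 0 o' (lam (app (app K_S (var 0)) (app (app (var 1) (var 1)) (var 0)))) =
      lam (app (app K_S (var 0)) (app (app (lift 0 o') (lift 0 o')) (var 0))) from rfl,
    bv_lift h (Nat.zero_le 0)]

theorem hmk3beta {o' : Lam} (h : bv 0 o' = true) :
    subst 0 o' (lam (app (SbB (var 0)) (app (app (var 1) (var 1)) (var 0)))) =
    lam (app (SbB (var 0)) (app (app o' o') (var 0))) := by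
  rw [show subst 0 o' (lam (app (SbB (var 0)) (app (app (var 1) (var 1)) (var 0)))) =
      lam (app (SbB (var 0)) (app (app (lift 0 o') (lift 0 o')) (var 0))) from rfl,
    bv_lift h (Nat.zero_le 0)]

theorem hmk4beta {o' : Lam} (h : bv 0 o' = true) :
    subst 0 o' (lam (lam (app (app (var 1) (var 0))
      (app (app (app (var 2) (var 2)) (var 1)) (var 0))))) =
    lam (lam (app (app (var 1) (var 0)) (app (app (app o' o') (var 1)) (var 0)))) := by
  rw [show subst 0 o' (lam (lam (app (app (var 1) (var 0))
        (app (app (app (var 2) (var 2)) (var 1)) (var 0))))) =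
      lam (lam (app (app (var 1) (var 0))
        (app (app (app (lift 0 (lift 0 o')) (lift 0 (lift 0 o'))) (var 1)) (var 0)))) from rfl,
    bv_lift h (Nat.zero_le 0), bv_lift h (Nat.zero_le 0)]

theorem GB.step {c : BC} {t : Lam} (h : GB c t) : ∀ u, Step t u → GB c u := by
  induction h with
  | @ee1 o o' h1 h2 =>
      intro u hs
      cases hs with
      | beta b c =>
          cases h1 with
          | mk1 hg =>
              rw [hmk1beta hg.bv]
              exact GB.ee2 hg (GB.ee1 h2 h2)
          | mk2 =>
              rw [hmk2beta h2.bv]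
              exact GB.ee3 (GB.p2 atom0 (GB.p1 (GB.ee1 h2 h2) atom0))
          | mk3 =>
              rw [hmk3beta h2.bv]
              exact GB.ee3 (GB.p3 atom0 (GB.p1 (GB.ee1 h2 h2) atom0))
          | mk4 =>
              rw [hmk4beta h2.bv]
              exact GB.ee3 (GB.p5 atom0
                (GB.q2 atom1 (GB.q1 atom1 (GB.p1 (GB.ee1 h2 h2) atom1))))
      | appL _ h' => exact GB.ee1 (h1.step h') h2
      | appR _ h' => exact GB.ee1 h1 (h2.step h')
  | @ee2 g X hg hX ih =>
      intro u hs
      cases hs with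
      | beta b c =>
          cases hg with
          | s1 =>
              rw [hS1beta]
              exact GB.ee3 (GB.p2 atom0
                (GB.p1 (hX.liftc 0 (fun _ h => nomatch h)) atom0))
          | s2 =>
              rw [hS2beta]
              exact GB.ee3 (GB.p3 atom0
                (GB.p1 (hX.liftc 0 (fun _ h => nomatch h)) atom0))
          | s3 =>
              rw [hS3beta]
              exact GB.ee3 (GB.p5 atom0 (GB.q2 atom1 (GB.q1 atom1
                (GB.p1 ((hX.liftc 0 (fun _ h => nomatch h)).liftc 0
                  (fun _ h => nomatch h)) atom1))))
      | appL _ h' => exact GB.ee2 (hg.step h') hX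
      | appR _ h' => exact GB.ee2 hg (ih _ h')
  | ee3 _ ih =>
      intro u hs
      cases hs with
      | lam h' => exact GB.ee3 (ih _ h')
  | @p1 X a hX ha ih =>
      intro u hs
      cases hs with
      | beta b c =>
          cases hX with
          | ee3 hb =>
              have h' := hb.substc 0 a ha (fun _ h => nomatch h)
              rw [show (BC.st (var 0)).substT 0 a = BC.st a from rfl] at h'
              exact h'
      | appL _ h' => exact GB.p1 (ih _ h') ha
      | appR _ h' => exact (ha.nostep h').elim
  | @p2 a s ha hs' ih =>
      intro u hs
      cases hs with
      | appL _ h' =>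
          cases h' with
          | beta b c =>
              rw [hKSbeta]
              exact GB.p3 ha hs'
          | appL _ h'' => exact absurd h''.hasRedex (by decide)
          | appR _ h'' => exact (ha.nostep h'').elim
      | appR _ h' => exact GB.p2 ha (ih _ h')
  | @p3 a s ha hs' ih =>
      intro u hs
      cases hs with
      | beta b c =>
          rw [Sb_beta]
          exact GB.p5 ha (GB.q2 (ha.lift 0) (GB.q1 (ha.lift 0)
            (hs'.liftc 0 (fun _ h => nomatch h))))
      | appL _ h' =>
          rcases ha with haI | ⟨n, han⟩
          · subst haI
            cases h' with
            | lam h1 =>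
                cases h1 with
                | lam h2 =>
                    cases h2 with
                    | appL _ h3 =>
                        cases h3 with
                        | beta b c =>
                            exact GB.p3d (Or.inl rfl) hs'
                        | appL _ h4 => exact absurd h4.hasRedex (by decide)
                        | appR _ h4 => cases h4
                    | appR _ h3 => exact absurd h3.hasRedex (by decide)
          · subst han
            cases h' with
            | lam h1 =>
                cases h1 with
                | lam h2 =>
                    cases h2 with
                    | appL _ h3 =>
                        cases h3 with
                        | appL _ h4 => cases h4
                        | appR _ h4 => cases h4
                    | appR _ h3 => exact absurd h3.hasRedex (by decide)
      | appR _ h' => exact GB.p3 ha (ih _ h')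
  | @p3d a s ha hs' ih =>
      intro u hs
      cases hs with
      | beta b c =>
          rw [hdeltabeta]
          exact GB.p5 ha (GB.q3 (ha.lift 0) (GB.q1 (ha.lift 0)
            (hs'.liftc 0 (fun _ h => nomatch h))))
      | appL _ h' => exact absurd h'.hasRedex (by decide)
      | appR _ h' => exact GB.p3d ha (ih _ h')
  | @p4 a s ha hs' ih =>
      intro u hs
      cases hs with
      | beta b c =>
          rcases ha with haI | ⟨n, han⟩
          · cases haI
            exact hs'
          · cases han
      | appL _ h' => exact (ha.nostep h').elim
      | appR _ h' => exact GB.p4 ha (ih _ h')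
  | @p5 a b ha hb ih =>
      intro u hs
      cases hs with
      | lam h' => exact GB.p5 ha (ih _ h')
  | @q1 a q ha hq ih =>
      intro u hs
      cases hs with
      | beta b c =>
          cases hq with
          | p5 ha' hb' =>
              have h' := hb'.substc 0 (var 0) atom0 (fun _ _ => Or.inr rfl)
              rw [show (BC.st2 (lift 0 a)).substT 0 (var 0) = BC.st2 a from by
                simp only [BC.substT]; rw [subst_lift]] at h'
              exact h'
      | appL _ h' => exact GB.q1 ha (ih _ h')
      | appR _ h' => cases h'
  | @q2 a s ha hs' ih =>
      intro u hs
      cases hs with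
      | appL _ h' =>
          cases h' with
          | beta b c =>
              rcases ha with haI | ⟨n, han⟩
              · cases haI
                exact GB.q3 (Or.inl rfl) hs'
              · cases han
          | appL _ h'' => exact (ha.nostep h'').elim
          | appR _ h'' => cases h''
      | appR _ h' => exact GB.q2 ha (ih _ h')
  | @q3 a s ha hs' ih =>
      intro u hs
      cases hs with
      | appL _ h' => cases h'
      | appR _ h' => exact GB.q3 ha (ih _ h')

theorem GB.occI {c : BC} {t : Lam} (h : GB c t) :
    (c = BC.st K_I ∨ c = BC.st2 K_I) → occI t = true := by
  induction h with
  | ee1 _ _ => rintro (h | h) <;> cases h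
  | ee2 _ _ _ => rintro (h | h) <;> cases h
  | ee3 _ _ => rintro (h | h) <;> cases h
  | p1 _ ha _ =>
      rintro (h | h) <;> cases h
      simp [Lam.occI, K_I]
  | p2 _ _ ih =>
      rintro (h | h) <;> cases h
      simp [Lam.occI, ih (Or.inl rfl)]
  | p3 _ _ ih =>
      rintro (h | h) <;> cases h
      simp [Lam.occI, ih (Or.inl rfl)]
  | p3d _ _ ih =>
      rintro (h | h) <;> cases h
      simp [Lam.occI, ih (Or.inl rfl)]
  | p4 _ _ ih =>
      rintro (h | h) <;> cases h
      simp [Lam.occI, ih (Or.inl rfl)]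
  | p5 _ _ ih =>
      rintro (h | h) <;> cases h
      simp [Lam.occI, ih (Or.inr (by rw [show lift 0 K_I = K_I from rfl]))]
  | q1 _ _ ih =>
      rintro (h | h) <;> cases h
      simp [Lam.occI, ih (Or.inl rfl)]
  | q2 _ _ ih =>
      rintro (h | h) <;> cases h
      simp [Lam.occI, K_I]
  | q3 _ _ ih =>
      rintro (h | h) <;> cases h
      simp [Lam.occI, ih (Or.inr rfl)]



theorem red_conv {t u : Lam} (h : Red t u) : Conv t u := by
  induction h with
  | refl => exact Relation.EqvGen.refl t
  | tail _ hstep ih =>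
      exact Relation.EqvGen.trans _ _ _ ih (Relation.EqvGen.rel _ _ hstep)

theorem red_GA {t u : Lam} (h : Red t u) (ht : GA 0 t) : GA 0 u := by
  induction h with
  | refl => exact ht
  | tail _ hstep ih => exact ih.step _ hstep

theorem red_GB {t u : Lam} (h : Red t u) (ht : GB (BC.st K_I) t) : GB (BC.st K_I) u := by
  induction h with
  | refl => exact ht
  | tail _ hstep ih => exact ih.step _ hstep

def om2SS : Lam := lam (app (app K_S K_S) (app (var 0) (var 0)))

theorem redA : Red (app (app Y0 K_delta) K_delta) (app (app omA omA) K_delta) := by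
  refine Relation.ReflTransGen.single (Step.appL _ ?_)
  have h := Step.beta (app K_omega K_omega) K_delta
  rwa [show subst 0 K_delta (app K_omega K_omega) = app omA omA from by decide] at h

theorem redB : Red (app (app (app (app K_B Y0) K_S) K_S) K_I)
    (app (app om2SS om2SS) K_I) := by
  have b1 : Step (app K_B Y0) (lam (lam (app Y0 (app (var 1) (var 0))))) := by
    have h := Step.beta (lam (lam (app (var 2) (app (var 1) (var 0))))) Y0
    rwa [show subst 0 Y0 (lam (lam (app (var 2) (app (var 1) (var 0))))) =
        lam (lam (app Y0 (app (var 1) (var 0)))) from by decide] at h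
  have b2 : Step (app (lam (lam (app Y0 (app (var 1) (var 0))))) K_S)
      (lam (app Y0 (app K_S (var 0)))) := by
    have h := Step.beta (lam (app Y0 (app (var 1) (var 0)))) K_S
    rwa [show subst 0 K_S (lam (app Y0 (app (var 1) (var 0)))) =
        lam (app Y0 (app K_S (var 0))) from by decide] at h
  have b3 : Step (app (lam (app Y0 (app K_S (var 0)))) K_S)
      (app Y0 (app K_S K_S)) := by
    have h := Step.beta (app Y0 (app K_S (var 0))) K_S
    rwa [show subst 0 K_S (app Y0 (app K_S (var 0))) =
        app Y0 (app K_S K_S) from by decide] at h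
  have b4 : Step (app Y0 (app K_S K_S)) (app om2SS om2SS) := by
    have h := Step.beta (app K_omega K_omega) (app K_S K_S)
    rwa [show subst 0 (app K_S K_S) (app K_omega K_omega) =
        app om2SS om2SS from by decide] at h
  exact Relation.ReflTransGen.head (Step.appL _ (Step.appL _ (Step.appL _ b1)))
    (Relation.ReflTransGen.head (Step.appL _ (Step.appL _ b2))
      (Relation.ReflTransGen.head (Step.appL _ b3)
        (Relation.ReflTransGen.single (Step.appL _ b4))))


theorem Y2_not_conv_U2' :
    ¬ Conv (app (app Y0 K_delta) K_delta)
           (app (app (app (app K_B Y0) K_S) K_S) K_I) := by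
  intro h
  have hconv : Conv (app (app omA omA) K_delta) (app (app om2SS om2SS) K_I) :=
    Relation.EqvGen.trans _ _ _ (Relation.EqvGen.symm _ _ (red_conv redA))
      (Relation.EqvGen.trans _ _ _ h (red_conv redB))
  rcases conv_join hconv with ⟨c, hc1, hc2⟩
  have hA : GA 0 c := red_GA hc1 (GA.apd (GA.ww OA.om OA.om))
  have hB : GB (BC.st K_I) c :=
    red_GB hc2 (GB.p1 (GB.ee1 (O2.mk1 GG.ss) (O2.mk1 GG.ss)) (Or.inl rfl))
  have h1 := hA.occI
  have h2 := hB.occI (Or.inl rfl)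
  rw [h1] at h2
  cases h2



/-- `Y0 δ δ` and `B Y0 S S I` are not β-convertible. -/
theorem Y2_not_conv_U2 :
    ¬ Conv (app (app Y0 K_delta) K_delta)
           (app (app (app (app K_B Y0) K_S) K_S) K_I) := by
  exact Y2_not_conv_U2'

end Lam
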